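/- (Integrality gap for bounded 2-dimAP+.) For every integer s ≥ 2, with n = s² and k = n − 2, there exist: a finite set V with |V| = n; a set T ⊆ V with |T| = k; a bijection f₀ from T onto {0,…,s−1}² \ {(0,0), (s−1,s−1)}; a symmetric weight function w : V × V → ℝ≥0; and a metric dist on V with dist(x,y) = ‖f₀(x) − f₀(y)‖₂ for all x,y ∈ T and satisfying the 2-dimensional spreading constraints, such that ∑_{{u,v}} w(u,v)·dist(u,v) = 1, while every injective map f : V → {0,…,s−1}² with f(t) = f₀(t) for all t ∈ T satisfies ∑_{{u,v}} w(u,v)·‖f(u) − f(v)‖₂ = √2·(s−1). In particular, the integrality gap of the spreading LP for bounded 2-dimAP+ is Ω(√k). -/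

import Mathlib

open scoped BigOperators

/-- Euclidean distance between two points of the integer lattice `ℤ²`. -/
noncomputable def eDist2 (p q : ℤ × ℤ) : ℝ :=
  Real.sqrt (((p.1 : ℝ) - (q.1 : ℝ)) ^ 2 + ((p.2 : ℝ) - (q.2 : ℝ)) ^ 2)

/-- `dist` is a metric on `V`. -/
def IsMetric {V : Type*} (dist : V → V → ℝ) : Prop :=
  (∀ x, dist x x = 0) ∧ (∀ x y, 0 ≤ dist x y) ∧ (∀ x y, dist x y = dist y x) ∧
  (∀ x y z, dist x z ≤ dist x y + dist y z) ∧ (∀ x y, dist x y = 0 → x = y)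

/-- The grid `{0,…,s-1}²` with the two corners `(0,0)` and `(s-1,s-1)` removed. -/
def cornerFreeGrid (s : ℕ) : Set (ℤ × ℤ) :=
  {p | (0 ≤ p.1 ∧ p.1 < (s : ℤ) ∧ 0 ≤ p.2 ∧ p.2 < (s : ℤ)) ∧
    p ≠ (0, 0) ∧ p ≠ ((s : ℤ) - 1, (s : ℤ) - 1)}

lemma eDist2_eq_abs (p q : ℤ × ℤ) :
    eDist2 p q = ‖(⟨(p.1 : ℝ) - q.1, (p.2 : ℝ) - q.2⟩ : ℂ)‖ := by
  rw [Complex.norm_def, Complex.normSq_apply, eDist2]; ring_nf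

lemma eDist2_self (p : ℤ × ℤ) : eDist2 p p = 0 := by simp [eDist2]

lemma eDist2_nonneg (p q : ℤ × ℤ) : 0 ≤ eDist2 p q := Real.sqrt_nonneg _

lemma eDist2_comm (p q : ℤ × ℤ) : eDist2 p q = eDist2 q p := by
  unfold eDist2; ring_nf

lemma eDist2_triangle (p q r : ℤ × ℤ) : eDist2 p r ≤ eDist2 p q + eDist2 q r := by
  rw [eDist2_eq_abs, eDist2_eq_abs, eDist2_eq_abs]
  have h : (⟨(p.1 : ℝ) - r.1, (p.2 : ℝ) - r.2⟩ : ℂ)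
      = ⟨(p.1 : ℝ) - q.1, (p.2 : ℝ) - q.2⟩ + ⟨(q.1 : ℝ) - r.1, (q.2 : ℝ) - r.2⟩ := by
    apply Complex.ext <;> simp <;> ring
  rw [h]; exact norm_add_le _ _

lemma eDist2_eq_zero {p q : ℤ × ℤ} (h : eDist2 p q = 0) : p = q := by
  rw [eDist2_eq_abs] at h
  have := norm_eq_zero.mp h
  have h1 : (p.1 : ℝ) = q.1 := by
    have := congrArg Complex.re this; simp at this; linarith
  have h2 : (p.2 : ℝ) = q.2 := by
    have := congrArg Complex.im this; simp at this; linarith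
  have : p.1 = q.1 := by exact_mod_cast h1
  have : p.2 = q.2 := by exact_mod_cast h2
  exact Prod.ext ‹p.1 = q.1› ‹p.2 = q.2›

def cheb (p q : ℤ × ℤ) : ℕ := max (p.1 - q.1).natAbs (p.2 - q.2).natAbs

lemma cheb_le_eDist2 (p q : ℤ × ℤ) : (cheb p q : ℝ) ≤ eDist2 p q := by
  have h1 : (((p.1 - q.1).natAbs : ℝ)) ≤ eDist2 p q := by
    rw [eDist2]
    have : (((p.1 - q.1).natAbs : ℝ)) = |((p.1 : ℝ) - q.1)| := by
      rw [Nat.cast_natAbs]; push_cast; rfl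
    rw [this, ← Real.sqrt_sq_eq_abs]
    apply Real.sqrt_le_sqrt; nlinarith [sq_nonneg ((p.2:ℝ) - q.2)]
  have h2 : (((p.2 - q.2).natAbs : ℝ)) ≤ eDist2 p q := by
    rw [eDist2]
    have : (((p.2 - q.2).natAbs : ℝ)) = |((p.2 : ℝ) - q.2)| := by
      rw [Nat.cast_natAbs]; push_cast; rfl
    rw [this, ← Real.sqrt_sq_eq_abs]
    apply Real.sqrt_le_sqrt; nlinarith [sq_nonneg ((p.1:ℝ) - q.1)]
  rcases max_cases (p.1 - q.1).natAbs (p.2 - q.2).natAbs with ⟨h, _⟩ | ⟨h, _⟩ <;>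
    rw [cheb, h] <;> assumption

lemma cheb_pos {p q : ℤ × ℤ} (h : p ≠ q) : 1 ≤ cheb p q := by
  rcases Nat.eq_zero_or_pos (cheb p q) with h0 | h0
  · exfalso
    rw [cheb, Nat.max_eq_zero_iff, Int.natAbs_eq_zero, Int.natAbs_eq_zero] at h0
    exact h (Prod.ext (by omega) (by omega))
  · exact h0

lemma count_cheb (S : Finset (ℤ × ℤ)) (p : ℤ × ℤ) (r : ℕ) :
    (S.filter (fun q => cheb p q ≤ r)).card ≤ (2 * r + 1) ^ 2 := by
  classical
  have hsub : S.filter (fun q => cheb p q ≤ r) ⊆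
      Finset.Icc (p.1 - r) (p.1 + r) ×ˢ Finset.Icc (p.2 - r) (p.2 + r) := by
    intro q hq
    rw [Finset.mem_filter] at hq
    have h := hq.2
    rw [cheb, max_le_iff] at h
    have h1 : |p.1 - q.1| ≤ (r : ℤ) := by
      rw [Int.abs_eq_natAbs]; exact_mod_cast h.1
    have h2 : |p.2 - q.2| ≤ (r : ℤ) := by
      rw [Int.abs_eq_natAbs]; exact_mod_cast h.2
    rw [abs_le] at h1 h2
    rw [Finset.mem_product, Finset.mem_Icc, Finset.mem_Icc]
    omega
  calc (S.filter (fun q => cheb p q ≤ r)).card ≤ _ := Finset.card_le_card hsub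
    _ = (2 * r + 1) ^ 2 := by
        rw [Finset.card_product, Int.card_Icc, Int.card_Icc]
        have : (p.1 + r + 1 - (p.1 - r)) = (2 * r + 1 : ℤ) := by ring
        rw [this]
        have : (p.2 + r + 1 - (p.2 - r)) = (2 * r + 1 : ℤ) := by ring
        rw [this]
        have : ((2 * (r:ℤ) + 1)).toNat = 2 * r + 1 := by omega
        rw [this]; ring

lemma sum_odd_sq (R : ℕ) :
    ∑ r ∈ Finset.range R, ((2 * r + 1 : ℕ) ^ 2 : ℝ) = (4 * R ^ 3 - R) / 3 := by
  induction R with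
  | zero => simp
  | succ n ih => rw [Finset.sum_range_succ, ih]; push_cast; ring

lemma layer_cake (S : Finset (ℤ × ℤ)) (p : ℤ × ℤ) (R : ℕ) :
    ∑ r ∈ Finset.range R, (S.filter (fun q => r < cheb p q)).card
      ≤ ∑ q ∈ S, cheb p q := by
  classical
  have key : ∀ r, (S.filter (fun q => r < cheb p q)).card
      = ∑ q ∈ S, if r < cheb p q then 1 else 0 := fun r => by
    rw [Finset.card_filter]
  calc ∑ r ∈ Finset.range R, (S.filter (fun q => r < cheb p q)).card
      = ∑ r ∈ Finset.range R, ∑ q ∈ S, (if r < cheb p q then 1 else 0) := by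
        exact Finset.sum_congr rfl fun r _ => key r
    _ = ∑ q ∈ S, ∑ r ∈ Finset.range R, (if r < cheb p q then 1 else 0) :=
        Finset.sum_comm
    _ ≤ ∑ q ∈ S, cheb p q := by
        apply Finset.sum_le_sum
        intro q _
        calc ∑ r ∈ Finset.range R, (if r < cheb p q then 1 else 0)
            = ((Finset.range R).filter (fun r => r < cheb p q)).card := by
              rw [Finset.card_filter]
          _ ≤ (Finset.range (cheb p q)).card := by
              apply Finset.card_le_card
              intro r hr
              rw [Finset.mem_filter] at hr
              exact Finset.mem_range.mpr hr.2
          _ = cheb p q := Finset.card_range _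

set_option maxHeartbeats 1000000 in
lemma lattice_spread (S : Finset (ℤ × ℤ)) (p : ℤ × ℤ) (hp : p ∈ S) :
    ((S.card : ℝ) - 1) ^ ((3 : ℝ) / 2) / 4 ≤ ∑ q ∈ S, eDist2 p q := by
  classical
  set m : ℕ := S.card - 1 with hm
  have hcard : S.card = m + 1 := by
    have := Finset.card_pos.mpr ⟨p, hp⟩; omega
  set N : ℕ := ∑ q ∈ S, cheb p q with hN
  -- sum of eDist2 is at least N
  have hNle : (N : ℝ) ≤ ∑ q ∈ S, eDist2 p q := by
    rw [hN]; push_cast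
    exact Finset.sum_le_sum fun q _ => cheb_le_eDist2 p q
  -- N ≥ m
  have hNm : m ≤ N := by
    have hsub : S.erase p ⊆ S := Finset.erase_subset p S
    have h1 : ∑ q ∈ S.erase p, cheb p q ≤ N := by
      rw [hN]; exact Finset.sum_le_sum_of_subset hsub
    have h2 : (S.erase p).card ≤ ∑ q ∈ S.erase p, cheb p q := by
      rw [Finset.card_eq_sum_ones]
      apply Finset.sum_le_sum
      intro q hq
      exact cheb_pos (fun h => (Finset.mem_erase.mp hq).1 h.symm)
    have : (S.erase p).card = m := by rw [Finset.card_erase_of_mem hp]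
    omega
  -- counting lower bound for each R
  have hcount : ∀ R : ℕ, (R : ℝ) * (m + 1) - (4 * R ^ 3 - R) / 3 ≤ N := by
    intro R
    have h1 : ∀ r : ℕ, ((m : ℝ) + 1) - ((2 * r + 1 : ℕ) ^ 2 : ℝ)
        ≤ ((S.filter (fun q => r < cheb p q)).card : ℝ) := by
      intro r
      have hsplit : (S.filter (fun q => r < cheb p q)).card
          = S.card - (S.filter (fun q => cheb p q ≤ r)).card := by
        have := Finset.card_filter_add_card_filter_not
          (s := S) (p := fun q => cheb p q ≤ r)
        simp only [not_le] at this
        omega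
      have hle := count_cheb S p r
      have hle2 : (S.filter (fun q => cheb p q ≤ r)).card ≤ S.card :=
        Finset.card_le_card (Finset.filter_subset _ _)
      rw [hsplit]
      have : ((S.card - (S.filter (fun q => cheb p q ≤ r)).card : ℕ) : ℝ)
          = (S.card : ℝ) - ((S.filter (fun q => cheb p q ≤ r)).card : ℝ) := by
        push_cast [Nat.cast_sub hle2]; ring
      rw [this, hcard]
      push_cast
      have : ((S.filter (fun q => cheb p q ≤ r)).card : ℝ) ≤ ((2*r+1)^2 : ℕ) := by
        exact_mod_cast hle
      push_cast at this ⊢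
      linarith
    have h2 : ∑ r ∈ Finset.range R, (((m : ℝ) + 1) - ((2 * r + 1 : ℕ) ^ 2 : ℝ))
        ≤ (N : ℝ) := by
      calc ∑ r ∈ Finset.range R, (((m : ℝ) + 1) - ((2 * r + 1 : ℕ) ^ 2 : ℝ))
          ≤ ∑ r ∈ Finset.range R,
              ((S.filter (fun q => r < cheb p q)).card : ℝ) :=
            Finset.sum_le_sum fun r _ => h1 r
        _ ≤ (N : ℝ) := by
            have := layer_cake S p R
            exact_mod_cast this
    rw [Finset.sum_sub_distrib, sum_odd_sq] at h2
    simp only [Finset.sum_const, Finset.card_range, nsmul_eq_mul] at h2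
    linarith
  -- rewrite goal
  have hgoal : ((S.card : ℝ) - 1) = (m : ℝ) := by rw [hcard]; push_cast; ring
  rw [hgoal]
  have hy : (m : ℝ) ^ ((3:ℝ)/2) = Real.sqrt m ^ 3 := by
    rw [show ((3:ℝ)/2) = (1/2) * 3 by norm_num, Real.rpow_mul (by positivity),
      ← Real.sqrt_eq_rpow, ← Real.rpow_natCast (Real.sqrt m) 3]
    norm_num
  rw [hy]
  set y : ℝ := Real.sqrt m with hydef
  have hy0 : 0 ≤ y := Real.sqrt_nonneg _
  have hy2 : y ^ 2 = m := Real.sq_sqrt (by positivity)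
  by_cases hm16 : m ≤ 16
  · -- small case: y ≤ 4, N ≥ m
    have hmr : (m : ℝ) ≤ 16 := by exact_mod_cast hm16
    have hy16 : y ^ 2 ≤ 16 := by rw [hy2]; exact hmr
    have hy4 : y ≤ 4 := by nlinarith [hy16, hy0]
    have : (m : ℝ) ≤ N := by exact_mod_cast hNm
    nlinarith [hy0, hy2]
  · -- large case
    push_neg at hm16
    have hm17 : (17 : ℝ) ≤ m := by exact_mod_cast hm16
    set t : ℕ := Nat.sqrt (m + 1) with ht
    set R : ℕ := (t + 1) / 2 with hR
    have ht1 : t ^ 2 ≤ m + 1 := by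
      have := Nat.sqrt_le' (m+1); rw [← ht] at this; nlinarith [this]
    have ht2 : m + 1 < (t + 1) ^ 2 := by
      have := Nat.lt_succ_sqrt' (m+1); rw [← ht] at this; nlinarith [this]
    have ht4 : 4 ≤ t := by nlinarith [ht2, hm16]
    have hR1 : t ≤ 2 * R := by omega
    have hR2 : 2 * R ≤ t + 1 := by omega
    have hkey := hcount R
    -- real versions
    have hu1 : (2 * (R:ℝ) - 1) ^ 2 ≤ (m:ℝ) + 1 := by
      have h : (2 * R - 1) ^ 2 ≤ m + 1 := by
        have : 2 * R - 1 ≤ t := by omega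
        calc (2 * R - 1)^2 ≤ t ^ 2 := Nat.pow_le_pow_left this 2
          _ ≤ m + 1 := ht1
      have hcast : ((2 * R - 1 : ℕ) : ℝ) = 2 * (R:ℝ) - 1 := by
        have : 1 ≤ 2 * R := by omega
        push_cast [Nat.cast_sub this]; ring
      calc (2 * (R:ℝ) - 1) ^ 2 = ((2 * R - 1 : ℕ) : ℝ) ^ 2 := by rw [hcast]
        _ ≤ (m:ℝ) + 1 := by exact_mod_cast h
    have hu2 : (m:ℝ) + 2 ≤ (2 * (R:ℝ) + 1) ^ 2 := by
      have h : m + 2 ≤ (2 * R + 1) ^ 2 := by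
        have : t + 1 ≤ 2 * R + 1 := by omega
        calc m + 2 ≤ (t+1)^2 := ht2
          _ ≤ (2*R+1)^2 := Nat.pow_le_pow_left this 2
      exact_mod_cast h
    have hu3 : (2:ℝ) ≤ R := by
      have : 2 ≤ R := by omega
      exact_mod_cast this
    have hNreal : (R : ℝ) * (m + 1) - (4 * (R:ℝ) ^ 3 - R) / 3 ≤ N := hkey
    have hmy : (m : ℝ) = y ^ 2 := hy2.symm
    rw [hmy] at hu1 hu2 hNreal hm17
    have hy4 : 4 ≤ y := by nlinarith
    set u : ℝ := (R : ℝ) with hudef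
    have hA : 0 ≤ y^2 + 1 - (2*u - 1)^2 := by linarith [hu1]
    have hB : 0 ≤ (2*u + 1)^2 - y^2 - 2 := by linarith [hu2]
    have hY : 0 ≤ y - 4 := by linarith
    have hU : 0 ≤ u - 2 := by linarith
    have hfinal : y ^ 3 / 4 ≤ u * (y^2 + 1) - (4 * u ^ 3 - u) / 3 := by
      nlinarith [mul_nonneg hA hY, mul_nonneg hA hU, mul_nonneg hB hY, mul_nonneg hB hU, mul_nonneg hA hB, sq_nonneg (y - 2*u), mul_nonneg hY hU]
    linarith

lemma pair_sum {V : Type} [Fintype V] [DecidableEq V] (a b : V) (hab : a ≠ b)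
    (X : V → V → ℝ) :
    ∑ u, ∑ v, (if (u = a ∧ v = b) ∨ (u = b ∧ v = a) then (1:ℝ) else 0) * X u v
      = X a b + X b a := by
  have key : ∀ u v : V,
      (if (u = a ∧ v = b) ∨ (u = b ∧ v = a) then (1:ℝ) else 0) * X u v
      = (if v = b then (if u = a then X u v else 0) else 0)
        + (if v = a then (if u = b then X u v else 0) else 0) := by
    intro u v
    split_ifs <;> simp_all <;> tauto
  simp only [key, Finset.sum_add_distrib]
  simp [Finset.sum_ite_eq']

/-- An integrality-gap instance for bounded 2-dimAP+ on the vertex set `V`: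
`|V| = n = s²`, `k = n - 2` terminals placed bijectively on the corner-free grid, a
feasible spreading-LP solution of cost `1`, while every feasible integral layout
(an injective extension of `f₀` into the grid `{0,…,s-1}²`) has cost `√2 · (s-1)`. -/
def BoundedGapInstance (s : ℕ) (V : Type) [Fintype V] [DecidableEq V] : Prop :=
  Fintype.card V = s ^ 2 ∧
  ∃ (T : Finset V) (f₀ : {x // x ∈ T} → ℤ × ℤ) (w : V → V → ℝ) (dist : V → V → ℝ),
    T.card = s ^ 2 - 2 ∧
    Function.Injective f₀ ∧
    (∀ x, f₀ x ∈ cornerFreeGrid s) ∧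
    (∀ p ∈ cornerFreeGrid s, ∃ x, f₀ x = p) ∧
    (∀ u v, w u v = w v u) ∧ (∀ u v, 0 ≤ w u v) ∧ (∀ v, w v v = 0) ∧
    IsMetric dist ∧
    (∀ x y : {x // x ∈ T}, dist x.1 y.1 = eDist2 (f₀ x) (f₀ y)) ∧
    (∀ S : Finset V, ∀ u ∈ S,
      ((S.card : ℝ) - 1) ^ ((3 : ℝ) / 2) / 4 ≤ ∑ v ∈ S, dist u v) ∧
    (∑ u, ∑ v, w u v * dist u v) / 2 = 1 ∧
    (∀ f : V → ℤ × ℤ, Function.Injective f →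
      (∀ v, 0 ≤ (f v).1 ∧ (f v).1 < (s : ℤ) ∧ 0 ≤ (f v).2 ∧ (f v).2 < (s : ℤ)) →
      (∀ t (ht : t ∈ T), f t = f₀ ⟨t, ht⟩) →
      (∑ u, ∑ v, w u v * eDist2 (f u) (f v)) / 2 = Real.sqrt 2 * ((s : ℝ) - 1))

/-- Integrality gap for bounded 2-dimAP+: for every `s ≥ 2` (with `n = s²` and
`k = n - 2`) there is an instance whose LP cost is `1` while every integral solution
costs `√2·(s-1) = Ω(√k)`. -/
theorem bounded_2dimap_plus_integrality_gap (s : ℕ) (hs : 2 ≤ s) :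
    ∃ (V : Type) (i1 : Fintype V) (i2 : DecidableEq V),
      @BoundedGapInstance s V i1 i2 := by
  classical
  refine ⟨Fin s × Fin s, inferInstance, inferInstance, ?_⟩
  have hs1 : 1 ≤ s := by omega
  set a : Fin s × Fin s := (⟨0, by omega⟩, ⟨0, by omega⟩) with ha
  set b : Fin s × Fin s := (⟨s - 1, by omega⟩, ⟨s - 1, by omega⟩) with hb
  have hab : a ≠ b := by
    intro h
    have := congrArg (fun p => (p.1 : Fin s).val) h
    simp [ha, hb] at this
    omega
  set g : Fin s × Fin s → ℤ × ℤ :=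
    fun v => if v = a then ((s : ℤ), (s : ℤ) - 1) else (((v.1 : ℕ) : ℤ), ((v.2 : ℕ) : ℤ)) with hg
  have hga : g a = ((s : ℤ), (s : ℤ) - 1) := by simp [hg]
  have hgne : ∀ v, v ≠ a → g v = (((v.1 : ℕ) : ℤ), ((v.2 : ℕ) : ℤ)) := by
    intro v hv; simp [hg, hv]
  have hgb : g b = ((s : ℤ) - 1, (s : ℤ) - 1) := by
    rw [hgne b (Ne.symm hab)]
    simp [hb]
    omega
  have hginj : Function.Injective g := by
    intro u v huv
    by_cases hu : u = a <;> by_cases hv : v = a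
    · rw [hu, hv]
    · exfalso
      rw [hu, hga, hgne v hv] at huv
      have h1 := congrArg Prod.fst huv
      simp at h1
      have := v.1.isLt
      omega
    · exfalso
      rw [hv, hga, hgne u hu] at huv
      have h1 := congrArg Prod.fst huv
      simp at h1
      have := u.1.isLt
      omega
    · rw [hgne u hu, hgne v hv] at huv
      have h1 := congrArg Prod.fst huv
      have h2 := congrArg Prod.snd huv
      simp at h1 h2
      exact Prod.ext (Fin.ext h1) (Fin.ext h2)
  set T : Finset (Fin s × Fin s) := Finset.univ \ {a, b} with hT
  have hmemT : ∀ x : Fin s × Fin s, x ∈ T ↔ x ≠ a ∧ x ≠ b := by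
    intro x
    rw [hT, Finset.mem_sdiff]
    simp only [Finset.mem_univ, true_and, Finset.mem_insert, Finset.mem_singleton]
    tauto
  have mkT : ∀ q : ℤ × ℤ, 0 ≤ q.1 → q.1 < (s:ℤ) → 0 ≤ q.2 → q.2 < (s:ℤ) →
      q ≠ (0,0) → q ≠ ((s:ℤ)-1, (s:ℤ)-1) →
      ∃ x : {x // x ∈ T}, ((((x.1.1 : ℕ) : ℤ)), (((x.1.2 : ℕ)) : ℤ)) = q := by
    intro q h1 h2 h3 h4 h5 h6
    have hq1 : q.1.toNat < s := by omega
    have hq2 : q.2.toNat < s := by omega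
    have hne_a : ((⟨q.1.toNat, hq1⟩, ⟨q.2.toNat, hq2⟩) : Fin s × Fin s) ≠ a := by
      intro h
      apply h5
      rw [ha, Prod.ext_iff] at h
      obtain ⟨e1, e2⟩ := h
      rw [Fin.ext_iff] at e1 e2
      simp only [Fin.val_mk] at e1 e2  -- e1 : q.1.toNat = 0
      exact Prod.ext (by omega) (by omega)
    have hne_b : ((⟨q.1.toNat, hq1⟩, ⟨q.2.toNat, hq2⟩) : Fin s × Fin s) ≠ b := by
      intro h
      apply h6
      rw [hb, Prod.ext_iff] at h
      obtain ⟨e1, e2⟩ := h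
      rw [Fin.ext_iff] at e1 e2
      simp only [Fin.val_mk] at e1 e2
      exact Prod.ext (by simp; omega) (by simp; omega)
    refine ⟨⟨_, (hmemT _).mpr ⟨hne_a, hne_b⟩⟩, ?_⟩
    exact Prod.ext (by simp; omega) (by simp; omega)
  constructor
  · simp [pow_two]
  refine ⟨T, fun x => (((x.1.1 : ℕ) : ℤ), ((x.1.2 : ℕ) : ℤ)),
    fun u v => if (u = a ∧ v = b) ∨ (u = b ∧ v = a) then (1:ℝ) else 0,
    fun u v => eDist2 (g u) (g v), ?_, ?_, ?_, ?_, ?_, ?_, ?_, ?_, ?_, ?_, ?_, ?_⟩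
  · -- card
    rw [hT, Finset.card_sdiff_of_subset (Finset.subset_univ _)]
    have : ({a, b} : Finset (Fin s × Fin s)).card = 2 := by
      rw [Finset.card_insert_of_notMem (by simp [hab]), Finset.card_singleton]
    rw [this]
    simp [pow_two]
  · -- injective f₀
    intro x y hxy
    have h1 := congrArg Prod.fst hxy
    have h2 := congrArg Prod.snd hxy
    simp at h1 h2
    exact Subtype.ext (Prod.ext (Fin.ext h1) (Fin.ext h2))
  · -- maps into cornerFreeGrid
    intro x
    obtain ⟨hxa, hxb⟩ := (hmemT x.1).mp x.2
    refine ⟨⟨?_, ?_, ?_, ?_⟩, ?_, ?_⟩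
    · show (0:ℤ) ≤ ((x.1.1 : ℕ) : ℤ); positivity
    · show (((x.1.1 : ℕ)) : ℤ) < (s:ℤ); exact_mod_cast x.1.1.isLt
    · show (0:ℤ) ≤ ((x.1.2 : ℕ) : ℤ); positivity
    · show (((x.1.2 : ℕ)) : ℤ) < (s:ℤ); exact_mod_cast x.1.2.isLt
    · intro h
      apply hxa
      have h1 := congrArg Prod.fst h
      have h2 := congrArg Prod.snd h
      simp at h1 h2
      exact Prod.ext (Fin.ext (by simp [ha, h1])) (Fin.ext (by simp [ha, h2]))
    · intro h
      apply hxb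
      have h1 := congrArg Prod.fst h
      have h2 := congrArg Prod.snd h
      simp at h1 h2
      have e1 : (x.1.1 : ℕ) = s - 1 := by omega
      have e2 : (x.1.2 : ℕ) = s - 1 := by omega
      exact Prod.ext (Fin.ext (by simp [hb, e1])) (Fin.ext (by simp [hb, e2]))
  · -- surjective onto cornerFreeGrid
    intro p hp
    obtain ⟨⟨hp1, hp2, hp3, hp4⟩, hp5, hp6⟩ := hp
    exact mkT p hp1 hp2 hp3 hp4 hp5 hp6
  · -- w symmetric
    intro u v
    dsimp only
    exact if_congr (by tauto) rfl rfl
  · -- w nonneg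
    intro u v
    dsimp only
    split_ifs <;> norm_num
  · -- w diag
    intro v
    dsimp only
    rw [if_neg]
    rintro (⟨h1, h2⟩ | ⟨h1, h2⟩) <;> exact hab (h1 ▸ h2 ▸ rfl)
  · -- metric
    refine ⟨fun x => eDist2_self _, fun x y => eDist2_nonneg _ _,
      fun x y => eDist2_comm _ _, fun x y z => eDist2_triangle _ _ _,
      fun x y h => hginj (eDist2_eq_zero h)⟩
  · -- dist on terminals
    intro x y
    obtain ⟨hxa, _⟩ := (hmemT x.1).mp x.2
    obtain ⟨hya, _⟩ := (hmemT y.1).mp y.2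
    dsimp only
    rw [hgne x.1 hxa, hgne y.1 hya]
  · -- spreading
    intro S u hu
    dsimp only
    have himg : ∑ v ∈ S, eDist2 (g u) (g v) = ∑ q ∈ S.image g, eDist2 (g u) q := by
      rw [Finset.sum_image (fun x _ y _ h => hginj h)]
    rw [himg]
    have hcard : (S.image g).card = S.card := Finset.card_image_of_injective S hginj
    rw [← hcard]
    exact lattice_spread _ _ (Finset.mem_image_of_mem g hu)
  · -- LP cost
    rw [pair_sum a b hab]
    have h1 : eDist2 (g a) (g b) = 1 := by
      rw [hga, hgb, eDist2]
      norm_num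
    rw [eDist2_comm (g b) (g a), h1]
    norm_num
  · -- integral cost
    intro f hfinj hfgrid hfext
    have hcorner : ∀ v : Fin s × Fin s, v = a ∨ v = b →
        f v = (0, 0) ∨ f v = ((s : ℤ) - 1, (s : ℤ) - 1) := by
      intro v hv
      by_contra hcon
      push_neg at hcon
      obtain ⟨hb1, hb2, hb3, hb4⟩ := hfgrid v
      obtain ⟨x, hx⟩ := mkT (f v) hb1 hb2 hb3 hb4 hcon.1 hcon.2
      have hfx : f x.1 = f v := by
        rw [hfext x.1 x.2]
        exact hx
      have hxv : x.1 = v := hfinj hfx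
      have hxT := (hmemT x.1).mp x.2
      rcases hv with rfl | rfl
      · exact hxT.1 hxv
      · exact hxT.2 hxv
    have hfab : f a ≠ f b := fun h => hab (hfinj h)
    have hdist : eDist2 (f a) (f b) = Real.sqrt 2 * ((s : ℝ) - 1) := by
      have key : ∀ p q : ℤ × ℤ, p = (0,0) → q = ((s:ℤ)-1, (s:ℤ)-1) →
          eDist2 p q = Real.sqrt 2 * ((s : ℝ) - 1) := by
        rintro p q rfl rfl
        rw [eDist2]
        push_cast
        have h1 : ((0:ℝ) - ((s:ℝ)-1)) ^ 2 + ((0:ℝ) - ((s:ℝ)-1)) ^ 2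
            = 2 * ((s:ℝ)-1)^2 := by ring
        rw [h1, Real.sqrt_mul (by norm_num), Real.sqrt_sq (by
          have : (2:ℝ) ≤ (s:ℝ) := by exact_mod_cast hs
          linarith)]
      rcases hcorner a (Or.inl rfl) with h1 | h1 <;>
        rcases hcorner b (Or.inr rfl) with h2 | h2
      · exact absurd (h1.trans h2.symm) hfab
      · exact key _ _ h1 h2
      · rw [eDist2_comm]; exact key _ _ h2 h1
      · exact absurd (h1.trans h2.symm) hfab
    rw [pair_sum a b hab, eDist2_comm (f b) (f a), hdist]
    ring
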